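/- ∫_0^{5/6} log(2·sin(πt)) dt = (1/(2π)) · Σ_{n=1}^{∞} sin(nπ/3)/n². Equivalently, 4π·F(5/6) equals the hyperbolic volume Vol(S³\4₁) = 2·Im Li₂(e^{iπ/3}) = 2·Σ_{n=1}^{∞} sin(nπ/3)/n² of the figure-eight knot complement. -/

import Mathlib

open Real
open MeasureTheory Filter Set


noncomputable def myE (t : ℝ) : ℂ := Complex.exp ((2*π*t : ℝ) * Complex.I)

lemma absZ_sq (r t : ℝ) :
    ‖1 - (r:ℂ) * myE t‖ ^ 2 = 1 - 2*r*Real.cos (2*π*t) + r^2 := by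
  rw [Complex.sq_norm, Complex.normSq_apply, myE]
  simp only [Complex.sub_re, Complex.sub_im, Complex.mul_re, Complex.mul_im,
    Complex.exp_ofReal_mul_I_re, Complex.exp_ofReal_mul_I_im,
    Complex.ofReal_re, Complex.ofReal_im, Complex.one_re, Complex.one_im]
  nlinarith [Real.sin_sq_add_cos_sq (2*π*t)]

lemma abs_lower {r t : ℝ} (hr : 1/2 ≤ r) (hr1 : r ≤ 1) (hs : 0 ≤ Real.sin (π*t)) :
    Real.sin (π*t) ≤ ‖1 - (r:ℂ) * myE t‖ := by
  have h1 := absZ_sq r t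
  have h2 : Real.cos (2*π*t) = 2 * Real.cos (π*t)^2 - 1 := by
    rw [show 2*π*t = 2*(π*t) by ring, Real.cos_two_mul]
  have h3 := Real.sin_sq_add_cos_sq (π*t)
  have h4 : Real.sin (π*t)^2 ≤ ‖1 - (r:ℂ) * myE t‖ ^ 2 := by nlinarith
  nlinarith [norm_nonneg (1 - (r:ℂ) * myE t)]

lemma abs_upper {r : ℝ} (t : ℝ) (hr0 : 0 ≤ r) (hr1 : r ≤ 1) :
    ‖1 - (r:ℂ) * myE t‖ ≤ 2 := by
  calc ‖1 - (r:ℂ) * myE t‖ ≤ ‖(1:ℂ)‖ + ‖(r:ℂ) * myE t‖ := by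
        simpa [sub_eq_add_neg] using norm_add_le (1:ℂ) (-((r:ℂ) * myE t))
    _ ≤ 2 := by
        rw [norm_one, norm_mul, Complex.norm_real, Real.norm_eq_abs, myE, Complex.norm_exp_ofReal_mul_I]
        rw [abs_of_nonneg hr0]; linarith

lemma abs_at_one {t : ℝ} (ht : 0 ≤ t) (ht1 : t ≤ 1) :
    ‖1 - (1:ℂ) * myE t‖ = 2 * Real.sin (π*t) := by
  have hs : 0 ≤ Real.sin (π*t) := by
    apply Real.sin_nonneg_of_nonneg_of_le_pi (by positivity)
    nlinarith [Real.pi_pos]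
  have h1 : ‖1 - (1:ℂ) * myE t‖ ^ 2 = (2 * Real.sin (π*t))^2 := by
    have := absZ_sq 1 t
    have h2 : Real.cos (2*π*t) = 2 * Real.cos (π*t)^2 - 1 := by
      rw [show 2*π*t = 2*(π*t) by ring, Real.cos_two_mul]
    have h3 := Real.sin_sq_add_cos_sq (π*t)
    push_cast at this
    nlinarith
  calc ‖1 - (1:ℂ) * myE t‖
      = √(‖1 - (1:ℂ) * myE t‖ ^ 2) :=
        (Real.sqrt_sq (norm_nonneg _)).symm
    _ = √((2 * Real.sin (π*t))^2) := by rw [h1]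
    _ = 2 * Real.sin (π*t) := Real.sqrt_sq (by linarith)

lemma sin_ge {t : ℝ} (h0 : 0 ≤ t) (h1 : t ≤ 5/6) : t/2 ≤ Real.sin (π*t) := by
  have hpi := Real.pi_pos
  have hc := strictConcaveOn_sin_Icc.concaveOn
  have m1 : (0:ℝ) ∈ Set.Icc (0:ℝ) π := ⟨le_refl 0, Real.pi_nonneg⟩
  have m2 : π*(5/6) ∈ Set.Icc (0:ℝ) π := ⟨by positivity, by nlinarith⟩
  have key := hc.2 m1 m2 (show (0:ℝ) ≤ 1 - (6/5)*t by linarith)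
    (show (0:ℝ) ≤ (6/5)*t by linarith) (show (1 - (6/5)*t) + (6/5)*t = 1 by ring)
  simp only [smul_eq_mul, Real.sin_zero, mul_zero, zero_add] at key
  have h56 : Real.sin (π*(5/6)) = 1/2 := by
    rw [show π*(5/6) = π - π/6 by ring, Real.sin_pi_sub, Real.sin_pi_div_six]
  rw [h56] at key
  have : (6/5)*t*(π*(5/6)) = π*t := by ring
  rw [this] at key
  linarith

lemma dom_bound {r t : ℝ} (hr : 1/2 ≤ r) (hr1 : r ≤ 1) (ht : t ∈ Set.Ioc (0:ℝ) (5/6)) :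
    |Real.log (‖1 - (r:ℂ) * myE t‖)| ≤ Real.log 2 - Real.log t := by
  obtain ⟨ht0, ht1⟩ := ht
  have hsin : t/2 ≤ Real.sin (π*t) := sin_ge ht0.le ht1
  have hs0 : 0 < Real.sin (π*t) := by linarith
  have hA1 : Real.sin (π*t) ≤ ‖1 - (r:ℂ) * myE t‖ := abs_lower hr hr1 hs0.le
  have hA2 : ‖1 - (r:ℂ) * myE t‖ ≤ 2 := abs_upper t (by linarith) hr1
  have hA0 : 0 < ‖1 - (r:ℂ) * myE t‖ := lt_of_lt_of_le hs0 hA1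
  have hlt : Real.log t ≤ 0 := Real.log_nonpos ht0.le (by linarith)
  rw [abs_le]
  constructor
  · have : Real.log (t/2) ≤ Real.log (‖1 - (r:ℂ) * myE t‖) :=
      Real.log_le_log (by positivity) (le_trans hsin hA1)
    rw [Real.log_div ht0.ne' (by norm_num)] at this
    linarith
  · have : Real.log (‖1 - (r:ℂ) * myE t‖) ≤ Real.log 2 :=
      Real.log_le_log hA0 hA2
    linarith

lemma bound_integrable :
    IntegrableOn (fun t => Real.log 2 - Real.log t) (Set.Ioc (0:ℝ) (5/6)) volume := by
  apply intervalIntegral.integrableOn_deriv_of_nonneg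
    (g := fun t => t * Real.log 2 - (t * Real.log t - t))
  · exact ((continuous_id.mul continuous_const).sub
      (Real.continuous_mul_log.sub continuous_id)).continuousOn
  · intro x hx
    have h1 := ((hasDerivAt_id x).mul_const (Real.log 2)).sub
        ((Real.hasDerivAt_mul_log hx.1.ne').sub (hasDerivAt_id x))
    simp only [id] at h1
    exact h1.congr_deriv (by ring)
  · intro x hx
    have : Real.log x ≤ Real.log 2 := Real.log_le_log hx.1 (by linarith [hx.2])
    linarith

lemma hasSum_log_abs {r t : ℝ} (hr0 : 0 ≤ r) (hr1 : r < 1) :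
    HasSum (fun n : ℕ => -(r^n * Real.cos (2*π*n*t) / n))
      (Real.log (‖1 - (r:ℂ) * myE t‖)) := by
  have hw : ‖(r:ℂ) * myE t‖ < 1 := by
    rw [norm_mul, Complex.norm_real, Real.norm_eq_abs, myE,
      Complex.norm_exp_ofReal_mul_I, abs_of_nonneg hr0, mul_one]
    exact hr1
  have h := (Complex.hasSum_taylorSeries_neg_log hw).mapL Complex.reCLM
  have h2 : HasSum (fun n : ℕ => (((r:ℂ) * myE t)^n / n).re)
      (-(Real.log (‖1 - (r:ℂ) * myE t‖))) := by
    convert h using 1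
    simp [Complex.log_re]
    simp [Complex.log_re]
  have h3 := h2.neg
  rw [neg_neg] at h3
  convert h3 using 2 with n
  · rfl
  have hzn : ((r:ℂ) * myE t)^n / n
      = ((r^n / n : ℝ) : ℂ) * Complex.exp (((n * (2*π*t) : ℝ)) * Complex.I) := by
    rw [mul_pow, myE, ← Complex.exp_nat_mul]
    push_cast
    ring
  rw [hzn, Complex.re_ofReal_mul, Complex.exp_ofReal_mul_I_re]
  rw [show (n:ℝ) * (2*π*t) = 2*π*n*t by ring]
  ring

lemma stepA {r : ℝ} (hr : 1/2 ≤ r) (hr1 : r < 1) :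
    (∫ t in Set.Ioc (0:ℝ) (5/6), Real.log (‖1 - (r:ℂ) * myE t‖))
      = ∑' n : ℕ, (-(r^n * Real.sin (2*π*n*(5/6)) / (2*π*n^2))) := by
  have hr0 : (0:ℝ) ≤ r := by linarith
  set F : ℕ → ℝ → ℝ := fun n t => -(r^n * Real.cos (2*π*n*t) / n) with hF
  have hFc : ∀ n : ℕ, Continuous (F n) := by intro n; rw [hF]; fun_prop
  have hInt : ∀ n : ℕ, Integrable (F n) (volume.restrict (Set.Ioc (0:ℝ) (5/6))) :=
    fun n => (hFc n).integrableOn_Ioc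
  have hFle : ∀ n : ℕ, ∀ t : ℝ, ‖F n t‖ ≤ r ^ n := by
    intro n t
    rcases Nat.eq_zero_or_pos n with rfl | hn
    · simp [hF]
    have hcos : |Real.cos (2*π*n*t)| ≤ 1 := Real.abs_cos_le_one _
    have hnn : (1:ℝ) ≤ (n:ℝ) := by exact_mod_cast hn
    rw [hF, Real.norm_eq_abs, abs_neg, abs_div, abs_mul, abs_pow, abs_of_nonneg hr0,
      Nat.abs_cast, div_le_iff₀ (by linarith : (0:ℝ) < (n:ℝ))]
    have h5 : r^n * |Real.cos (2*π*n*t)| ≤ r^n * 1 :=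
      mul_le_mul_of_nonneg_left hcos (pow_nonneg hr0 n)
    nlinarith [pow_nonneg hr0 n]
  have hSum : Summable (fun n : ℕ => ∫ t in Set.Ioc (0:ℝ) (5/6), ‖F n t‖) := by
    apply Summable.of_nonneg_of_le
      (fun n => integral_nonneg (fun t => norm_nonneg _))
      (fun n => ?_) ((summable_geometric_of_lt_one hr0 hr1).mul_left (5/6))
    calc (∫ t in Set.Ioc (0:ℝ) (5/6), ‖F n t‖)
        ≤ ‖∫ t in Set.Ioc (0:ℝ) (5/6), ‖F n t‖‖ := le_abs_self _
      _ ≤ r^n * (volume (Set.Ioc (0:ℝ) (5/6))).toReal := by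
          apply norm_setIntegral_le_of_norm_le_const measure_Ioc_lt_top
            (fun x _ => by simpa using hFle n x)
      _ = 5/6 * r^n := by
          rw [Real.volume_Ioc]
          rw [show (5/6 : ℝ) - 0 = 5/6 by norm_num, ENNReal.toReal_ofReal (by norm_num)]
          ring
  have hEq : (fun t : ℝ => Real.log (‖1 - (r:ℂ) * myE t‖))
      = fun t => ∑' n, F n t :=
    funext fun t => ((hasSum_log_abs hr0 hr1).tsum_eq).symm
  rw [hEq, ← integral_tsum_of_summable_integral_norm hInt hSum]
  refine tsum_congr fun n => ?_
  rcases Nat.eq_zero_or_pos n with rfl | hn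
  · simp [hF]
  have hn0 : (n:ℝ) ≠ 0 := Nat.cast_ne_zero.mpr hn.ne'
  have hπ : π ≠ 0 := Real.pi_ne_zero
  have hFn : F n = fun t : ℝ => (-(r^n/n)) * Real.cos (2*π*n*t) := by
    funext t; rw [hF]; ring
  rw [hFn, ← intervalIntegral.integral_of_le (by norm_num : (0:ℝ) ≤ 5/6),
    intervalIntegral.integral_const_mul,
    intervalIntegral.integral_comp_mul_left (fun x => Real.cos x)
      (by positivity : 2*π*(n:ℝ) ≠ 0), integral_cos,
    show 2*π*(n:ℝ)*0 = 0 by ring, Real.sin_zero, sub_zero, smul_eq_mul]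
  have hinv : ((n:ℝ))⁻¹ * (2*π*(n:ℝ))⁻¹ = (2*π*(n:ℝ)^2)⁻¹ := by
    rw [← mul_inv]; congr 1; ring
  linear_combination (-(r^n * Real.sin (2*π*(n:ℝ)*(5/6)))) * hinv

lemma cont_abs_t (r : ℝ) : Continuous (fun t : ℝ => ‖1 - (r:ℂ) * myE t‖) := by
  apply continuous_norm.comp
  apply Continuous.sub continuous_const
  apply Continuous.mul continuous_const
  unfold myE
  exact Complex.continuous_exp.comp
    ((Complex.continuous_ofReal.comp (by fun_prop)).mul continuous_const)

lemma cont_abs_r (t : ℝ) : Continuous (fun r : ℝ => ‖1 - (r:ℂ) * myE t‖) := by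
  apply continuous_norm.comp
  exact Continuous.sub continuous_const (Complex.continuous_ofReal.mul continuous_const)

lemma term_bound {r : ℝ} (hr0 : 0 ≤ r) (hr1 : r ≤ 1) (n : ℕ) :
    ‖-(r^n * Real.sin (2*π*n*(5/6)) / (2*π*(n:ℝ)^2))‖ ≤ 1/(2*π) * (1/(n:ℝ)^2) := by
  rcases Nat.eq_zero_or_pos n with rfl | hn
  · simp
  have hπ := Real.pi_pos
  have hnn : (1:ℝ) ≤ (n:ℝ) := by exact_mod_cast hn
  have hden : (0:ℝ) < 2*π*(n:ℝ)^2 := by positivity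
  have hnum : |r ^ n * Real.sin (2*π*n*(5/6))| ≤ 1 := by
    rw [abs_mul]
    have h1 : |r ^ n| ≤ 1 := by
      rw [abs_pow, abs_of_nonneg hr0]
      exact pow_le_one₀ hr0 hr1
    have h2 : |Real.sin (2*π*n*(5/6))| ≤ 1 := Real.abs_sin_le_one _
    nlinarith [abs_nonneg (r^n), abs_nonneg (Real.sin (2*π*n*(5/6)))]
  rw [Real.norm_eq_abs, abs_neg, abs_div, abs_of_pos hden,
    show (1:ℝ)/(2*π) * (1/(n:ℝ)^2) = 1/(2*π*(n:ℝ)^2) by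
      rw [div_mul_div_comm, one_mul]]
  rw [div_le_div_iff₀ hden hden]
  nlinarith

lemma key_eq :
    (∫ t in Set.Ioc (0:ℝ) (5/6), Real.log (2 * Real.sin (π * t)))
      = ∑' n : ℕ, (-(Real.sin (2*π*n*(5/6)) / (2*π*(n:ℝ)^2))) := by
  set l := nhdsWithin (1:ℝ) (Set.Iio 1) with hl
  have hev : ∀ᶠ r in l, r ∈ Set.Ico (1/2:ℝ) 1 := by
    have h1 : Set.Ioo (1/2:ℝ) 1 ∈ l :=
      Ioo_mem_nhdsLT_of_mem (by constructor <;> norm_num)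
    exact Filter.mem_of_superset h1 (fun x hx => ⟨hx.1.le, hx.2⟩)
  have hL : Filter.Tendsto (fun r : ℝ => ∫ t in Set.Ioc (0:ℝ) (5/6),
      Real.log (‖1 - (r:ℂ) * myE t‖)) l
      (nhds (∫ t in Set.Ioc (0:ℝ) (5/6), Real.log (2 * Real.sin (π * t)))) := by
    apply MeasureTheory.tendsto_integral_filter_of_dominated_convergence
      (fun t => Real.log 2 - Real.log t)
    · apply Filter.Eventually.of_forall
      intro r
      exact (Real.measurable_log.comp (cont_abs_t r).measurable).aestronglyMeasurable
    · filter_upwards [hev] with r hr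
      rw [ae_restrict_iff' measurableSet_Ioc]
      apply Filter.Eventually.of_forall
      intro t ht
      rw [Real.norm_eq_abs]
      exact dom_bound hr.1 hr.2.le ht
    · exact bound_integrable
    · rw [ae_restrict_iff' measurableSet_Ioc]
      apply Filter.Eventually.of_forall
      intro t ht
      have habs : ‖1 - (1:ℂ) * myE t‖ = 2 * Real.sin (π*t) :=
        abs_at_one ht.1.le (by linarith [ht.2])
      have hpos : (0:ℝ) < 2 * Real.sin (π*t) := by
        have := sin_ge ht.1.le ht.2
        linarith [ht.1]
      have hca : ContinuousAt (fun r : ℝ => Real.log (‖1 - (r:ℂ) * myE t‖)) 1 := by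
        have hlog : ContinuousAt Real.log (‖1 - ((1:ℝ):ℂ) * myE t‖) := by
          apply Real.continuousAt_log
          simp only [Complex.ofReal_one] at habs ⊢
          rw [habs]
          exact hpos.ne'
        exact (ContinuousAt.comp (f := fun r : ℝ => ‖1 - (r:ℂ) * myE t‖)
          (g := Real.log) (x := (1:ℝ)) hlog (cont_abs_r t).continuousAt)
      have h2 := hca.tendsto.mono_left (nhdsWithin_le_nhds (s := Set.Iio (1:ℝ)))
      simp only [Complex.ofReal_one] at h2
      rw [show ‖1 - (1:ℂ) * myE t‖ = 2 * Real.sin (π*t) from habs] at h2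
      exact h2
  have hR : Filter.Tendsto (fun r : ℝ => ∑' n : ℕ,
      (-(r^n * Real.sin (2*π*n*(5/6)) / (2*π*(n:ℝ)^2)))) l
      (nhds (∑' n : ℕ, (-(Real.sin (2*π*n*(5/6)) / (2*π*(n:ℝ)^2))))) := by
    have hsum : Summable (fun n : ℕ => 1/(2*π) * (1/(n:ℝ)^2)) :=
      (summable_one_div_nat_pow.mpr one_lt_two).mul_left _
    apply tendsto_tsum_of_dominated_convergence hsum
    · intro n
      have hc : Continuous (fun r : ℝ =>
          -(r^n * Real.sin (2*π*n*(5/6)) / (2*π*(n:ℝ)^2))) := by fun_prop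
      have h3 := (hc.tendsto 1).mono_left (nhdsWithin_le_nhds (s := Set.Iio (1:ℝ)))
      simpa using h3
    · filter_upwards [hev] with r hr n
      exact term_bound (by linarith [hr.1]) hr.2.le n
  have heq : (fun r : ℝ => ∫ t in Set.Ioc (0:ℝ) (5/6),
        Real.log (‖1 - (r:ℂ) * myE t‖))
      =ᶠ[l] (fun r : ℝ => ∑' n : ℕ,
        (-(r^n * Real.sin (2*π*n*(5/6)) / (2*π*(n:ℝ)^2)))) :=
    hev.mono fun r hr => stepA hr.1 hr.2
  exact tendsto_nhds_unique (hL.congr' heq) hR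


/-- `∫_0^{5/6} log(2 sin(πt)) dt = (1/(2π)) Σ_{n≥1} sin(nπ/3)/n²`;
equivalently, `4π F(5/6)` equals the hyperbolic volume
`Vol(S³∖4₁) = 2 Im Li₂(e^{iπ/3}) = 2 Σ_{n≥1} sin(nπ/3)/n²` of the figure-eight
knot complement. -/
theorem stmt5 :
    (∫ t in (0 : ℝ)..(5 / 6 : ℝ), Real.log (2 * Real.sin (Real.pi * t)))
      = (1 / (2 * Real.pi)) *
          ∑' n : ℕ, Real.sin (((n : ℝ) + 1) * Real.pi / 3) / ((n : ℝ) + 1) ^ 2 ∧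
    4 * Real.pi * (∫ t in (0 : ℝ)..(5 / 6 : ℝ), Real.log (2 * Real.sin (Real.pi * t)))
      = 2 * ∑' n : ℕ, Real.sin (((n : ℝ) + 1) * Real.pi / 3) / ((n : ℝ) + 1) ^ 2 := by
  have hπ : π ≠ 0 := Real.pi_ne_zero
  have hsummable : Summable (fun n : ℕ => -(Real.sin (2*π*n*(5/6)) / (2*π*(n:ℝ)^2))) := by
    apply Summable.of_norm_bounded
      ((summable_one_div_nat_pow.mpr one_lt_two).mul_left (1/(2*π)))
    intro n
    have h := term_bound (r := 1) zero_le_one le_rfl n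
    simpa using h
  have h1 : (∫ t in (0:ℝ)..(5/6:ℝ), Real.log (2 * Real.sin (π * t)))
      = (1/(2*π)) * ∑' n : ℕ, Real.sin (((n:ℝ)+1)*π/3) / ((n:ℝ)+1)^2 := by
    rw [intervalIntegral.integral_of_le (by norm_num : (0:ℝ) ≤ 5/6), key_eq,
      Summable.tsum_eq_zero_add hsummable]
    have h0 : -(Real.sin (2*π*((0:ℕ):ℝ)*(5/6)) / (2*π*((0:ℕ):ℝ)^2)) = 0 := by
      norm_num
    rw [h0, zero_add, ← tsum_mul_left]
    apply tsum_congr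
    intro n
    have hc : ((n+1:ℕ):ℝ) = (n:ℝ)+1 := by push_cast; ring
    rw [hc,
      show 2*π*((n:ℝ)+1)*(5/6) = ((n+1:ℕ):ℝ)*(2*π) - (((n:ℝ)+1)*π/3) by push_cast; ring,
      Real.sin_nat_mul_two_pi_sub,
      show (1:ℝ)/(2*π) * (Real.sin (((n:ℝ)+1)*π/3)/((n:ℝ)+1)^2)
        = Real.sin (((n:ℝ)+1)*π/3)/(2*π*((n:ℝ)+1)^2) by rw [div_mul_div_comm, one_mul],
      neg_div, neg_neg]
  refine ⟨h1, ?_⟩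
  rw [h1]
  field_simp
  ring
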